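/- The MFM put price satisfies the boundary conditions: for fixed 0≤t<T, P(t,S) → K·e^{−r(T−t)} as S → 0⁺ and P(t,S) → 0 as S → ∞. -/

import Mathlib

open MeasureTheory ProbabilityTheory Real Filter

/-- The standard normal cumulative distribution function `Φ`. -/
noncomputable def stdNormalCDF (x : ℝ) : ℝ :=
  ((ProbabilityTheory.gaussianReal 0 1) (Set.Iic x)).toReal

lemma stdNormalCDF_eq_cdf : stdNormalCDF = ProbabilityTheory.cdf (gaussianReal 0 1) :=
  funext fun x => (ProbabilityTheory.cdf_eq_real _ x).symm

lemma stdNormalCDF_nonneg (x : ℝ) : 0 ≤ stdNormalCDF x := ENNReal.toReal_nonneg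

lemma stdNormalCDF_le_one (x : ℝ) : stdNormalCDF x ≤ 1 := by
  rw [stdNormalCDF_eq_cdf]; exact ProbabilityTheory.cdf_le_one _ x

lemma tendsto_stdNormalCDF_atTop : Tendsto stdNormalCDF atTop (nhds 1) := by
  rw [stdNormalCDF_eq_cdf]; exact ProbabilityTheory.tendsto_cdf_atTop _

lemma tendsto_stdNormalCDF_atBot : Tendsto stdNormalCDF atBot (nhds 0) := by
  rw [stdNormalCDF_eq_cdf]; exact ProbabilityTheory.tendsto_cdf_atBot _

lemma stdNormalCDF_le_exp {c : ℝ} (hc : 0 ≤ c) (y : ℝ) :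
    stdNormalCDF y ≤ Real.exp (c ^ 2 / 2 + c * y) := by
  have hpdf_int := ProbabilityTheory.integrable_gaussianPDFReal 0 1
  have hshift : Integrable (fun u => gaussianPDFReal 0 1 (u + c)) :=
    hpdf_int.comp_add_right c
  have hnn : ∀ u, 0 ≤ gaussianPDFReal 0 1 u := gaussianPDFReal_nonneg 0 1
  rw [stdNormalCDF, ProbabilityTheory.gaussianReal_apply_eq_integral 0 one_ne_zero,
    ENNReal.toReal_ofReal (setIntegral_nonneg measurableSet_Iic fun u _ => hnn u)]
  have hpt : ∀ u ∈ Set.Iic y,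
      gaussianPDFReal 0 1 u ≤ Real.exp (c ^ 2 / 2 + c * y) * gaussianPDFReal 0 1 (u + c) := by
    intro u hu
    simp only [gaussianPDFReal, NNReal.coe_one, mul_one, sub_zero]
    have key : Real.exp (-u ^ 2 / 2) ≤
        Real.exp (c ^ 2 / 2 + c * y) * Real.exp (-(u + c) ^ 2 / 2) := by
      rw [← Real.exp_add]
      apply Real.exp_le_exp.2
      have : 0 ≤ c * (y - u) := mul_nonneg hc (sub_nonneg.2 hu)
      nlinarith
    calc (√(2 * π))⁻¹ * Real.exp (-u ^ 2 / 2)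
        ≤ (√(2 * π))⁻¹ * (Real.exp (c ^ 2 / 2 + c * y) * Real.exp (-(u + c) ^ 2 / 2)) := by
          apply mul_le_mul_of_nonneg_left key (by positivity)
      _ = Real.exp (c ^ 2 / 2 + c * y) * ((√(2 * π))⁻¹ * Real.exp (-(u + c) ^ 2 / 2)) := by ring
  calc ∫ u in Set.Iic y, gaussianPDFReal 0 1 u
      ≤ ∫ u in Set.Iic y, Real.exp (c ^ 2 / 2 + c * y) * gaussianPDFReal 0 1 (u + c) :=
        setIntegral_mono_on hpdf_int.integrableOn ((hshift.const_mul _).integrableOn)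
          measurableSet_Iic hpt
    _ = Real.exp (c ^ 2 / 2 + c * y) * ∫ u in Set.Iic y, gaussianPDFReal 0 1 (u + c) :=
        integral_const_mul _ _
    _ ≤ Real.exp (c ^ 2 / 2 + c * y) * 1 := by
        apply mul_le_mul_of_nonneg_left _ (Real.exp_pos _).le
        have h1 : ∫ u, gaussianPDFReal 0 1 (u + c) = 1 := by
          rw [integral_add_right_eq_self]
          exact ProbabilityTheory.integral_gaussianPDFReal_eq_one 0 one_ne_zero
        have h2 := setIntegral_le_integral (s := Set.Iic y) hshift (ae_of_all _ fun u => hnn _)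
        rw [h1] at h2; exact h2
    _ = _ := mul_one _

set_option maxHeartbeats 1000000

/-- Boundary conditions for the MFM put price: `P(t,S) → K e^{-r(T-t)}` as `S → 0⁺`
and `P(t,S) → 0` as `S → ∞`. -/
theorem mfm_put_boundary_conditions
    (K r t T σ σH Hu μJ σJ lam k δt : ℝ)
    (hK : 0 < K) (ht : 0 ≤ t) (htT : t < T)
    (hσ : 0 < σ) (hσH : 0 < σH) (hH1 : 3 / 4 < Hu) (hH2 : Hu < 1)
    (hσJ : 0 < σJ) (hlam : 0 < lam) (hk : 0 ≤ k) (hδt : 0 < δt)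
    (σhat2 lam' : ℝ)
    (hσhat2 : σhat2 = σ ^ 2 + σH ^ 2 * δt ^ (2 * Hu - 1)
      + k * Real.sqrt ((2 / Real.pi) * (σ ^ 2 / δt + σH ^ 2 * δt ^ (2 * Hu - 2))))
    (hlam' : lam' = lam * Real.exp (μJ + σJ ^ 2 / 2))
    (σn rn w : ℕ → ℝ) (d1 d2 : ℕ → ℝ → ℝ)
    (hσn : ∀ n, σn n = Real.sqrt (σhat2 + n * σJ ^ 2 / (T - t)))
    (hrn : ∀ n, rn n = r - lam * (Real.exp (μJ + σJ ^ 2 / 2) - 1)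
      + n * (μJ + σJ ^ 2 / 2) / (T - t))
    (hd1 : ∀ n S, 0 < S → d1 n S = (Real.log (S / K) + rn n * (T - t)
      + (σn n) ^ 2 * (T - t) / 2) / (σn n * Real.sqrt (T - t)))
    (hd2 : ∀ n S, 0 < S → d2 n S = d1 n S - σn n * Real.sqrt (T - t))
    (hw : ∀ n, w n = Real.exp (-lam' * (T - t)) * (lam' * (T - t)) ^ n / n.factorial)
    (P : ℝ → ℝ)
    (hP : ∀ S, 0 < S → P S = ∑' n, w n
      * (K * Real.exp (-r * (T - t)) * stdNormalCDF (-(d2 n S))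
        - S * stdNormalCDF (-(d1 n S)))) :
    Tendsto P (nhdsWithin 0 (Set.Ioi 0)) (nhds (K * Real.exp (-r * (T - t)))) ∧
    Tendsto P atTop (nhds 0) := by
  have hτ : 0 < T - t := sub_pos.2 htT
  set τ := T - t with hτdef
  have hsτ : 0 < Real.sqrt τ := Real.sqrt_pos.2 hτ
  have hlam'pos : 0 < lam' := by rw [hlam']; positivity
  have hσhat2pos : 0 < σhat2 := by
    rw [hσhat2]
    have h1 : 0 < σ ^ 2 := by positivity
    have h2 : 0 ≤ σH ^ 2 * δt ^ (2 * Hu - 1) := by positivity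
    have h3 : 0 ≤ k * Real.sqrt ((2 / Real.pi) * (σ ^ 2 / δt + σH ^ 2 * δt ^ (2 * Hu - 2))) :=
      mul_nonneg hk (Real.sqrt_nonneg _)
    linarith
  have hσnarg : ∀ n : ℕ, 0 < σhat2 + n * σJ ^ 2 / τ := by
    intro n
    have : (0:ℝ) ≤ n * σJ ^ 2 / τ := by positivity
    linarith
  have hσnpos : ∀ n, 0 < σn n := fun n => by
    rw [hσn]; exact Real.sqrt_pos.2 (hσnarg n)
  have hapos : ∀ n, 0 < σn n * Real.sqrt τ := fun n => mul_pos (hσnpos n) hsτ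
  have hasq : ∀ n, (σn n * Real.sqrt τ) ^ 2 = (σn n) ^ 2 * τ := fun n => by
    rw [mul_pow, Real.sq_sqrt hτ.le]
  have had1 : ∀ n S, 0 < S → (σn n * Real.sqrt τ) * d1 n S
      = Real.log (S / K) + rn n * τ + (σn n) ^ 2 * τ / 2 := by
    intro n S hS
    rw [hd1 n S hS, mul_comm, div_mul_cancel₀ _ (hapos n).ne']
  -- first Chernoff bound : S * Φ(-d1) ≤ K exp(-(rn n τ))
  have hbd1 : ∀ n S, 0 < S →
      S * stdNormalCDF (-(d1 n S)) ≤ K * Real.exp (-(rn n * τ)) := by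
    intro n S hS
    have h := stdNormalCDF_le_exp (hapos n).le (-(d1 n S))
    have heq : (σn n * Real.sqrt τ) ^ 2 / 2 + (σn n * Real.sqrt τ) * (-(d1 n S))
        = -(Real.log (S / K)) - rn n * τ := by
      have h1 := had1 n S hS
      have h2 := hasq n
      linear_combination -h1 + h2 / 2
    rw [heq] at h
    have hexp : Real.exp (-(Real.log (S / K)) - rn n * τ)
        = K / S * Real.exp (-(rn n * τ)) := by
      rw [sub_eq_add_neg, Real.exp_add, Real.exp_neg, Real.exp_log (div_pos hS hK), inv_div]
    rw [hexp] at h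
    calc S * stdNormalCDF (-(d1 n S)) ≤ S * (K / S * Real.exp (-(rn n * τ))) :=
          mul_le_mul_of_nonneg_left h hS.le
      _ = K * Real.exp (-(rn n * τ)) := by field_simp
  -- second Chernoff bound : S * Φ(-d1) ≤ C n / S
  have hbd2 : ∀ n S, 0 < S →
      S * stdNormalCDF (-(d1 n S))
        ≤ K ^ 2 * Real.exp ((σn n) ^ 2 * τ - 2 * (rn n * τ)) / S := by
    intro n S hS
    have hc : (0:ℝ) ≤ 2 * (σn n * Real.sqrt τ) := by nlinarith [hapos n]
    have h := stdNormalCDF_le_exp hc (-(d1 n S))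
    have heq : (2 * (σn n * Real.sqrt τ)) ^ 2 / 2 + (2 * (σn n * Real.sqrt τ)) * (-(d1 n S))
        = (σn n) ^ 2 * τ - 2 * (rn n * τ) - 2 * Real.log (S / K) := by
      have h1 := had1 n S hS
      have h2 := hasq n
      linear_combination (-2) * h1 + 2 * h2
    rw [heq] at h
    have hexp : Real.exp ((σn n) ^ 2 * τ - 2 * (rn n * τ) - 2 * Real.log (S / K))
        = Real.exp ((σn n) ^ 2 * τ - 2 * (rn n * τ)) * (K / S) ^ 2 := by
      rw [sub_eq_add_neg, Real.exp_add]
      congr 1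
      rw [show -(2 * Real.log (S / K)) = -Real.log (S / K) + -Real.log (S / K) by ring,
        Real.exp_add, Real.exp_neg, Real.exp_log (div_pos hS hK), inv_div]
      ring
    rw [hexp] at h
    calc S * stdNormalCDF (-(d1 n S))
        ≤ S * (Real.exp ((σn n) ^ 2 * τ - 2 * (rn n * τ)) * (K / S) ^ 2) :=
          mul_le_mul_of_nonneg_left h hS.le
      _ = K ^ 2 * Real.exp ((σn n) ^ 2 * τ - 2 * (rn n * τ)) / S := by
          field_simp
  -- notation
  set A := K * Real.exp (-r * τ) with hAdef
  have hA0 : 0 < A := by rw [hAdef]; positivity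
  set mJ := μJ + σJ ^ 2 / 2 with hmJ
  have hrnτ : ∀ n : ℕ, rn n * τ = (r - lam * (Real.exp mJ - 1)) * τ + n * mJ := by
    intro n
    rw [hrn]
    field_simp
  set E := fun n : ℕ => Real.exp (-(rn n * τ)) with hEdef
  have hE : ∀ n, E n
      = Real.exp (-((r - lam * (Real.exp mJ - 1)) * τ)) * Real.exp (-mJ) ^ n := by
    intro n
    rw [hEdef]
    simp only []
    rw [hrnτ n, show -((r - lam * (Real.exp mJ - 1)) * τ + n * mJ)
      = -((r - lam * (Real.exp mJ - 1)) * τ) + (n : ℝ) * (-mJ) by ring,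
      Real.exp_add, Real.exp_nat_mul]
  have hEpos : ∀ n, 0 < E n := fun n => Real.exp_pos _
  have hw0 : ∀ n, 0 ≤ w n := fun n => by
    rw [hw]
    have : 0 ≤ lam' * τ := (mul_pos hlam'pos hτ).le
    positivity
  -- summability facts
  have hsumw : Summable w := by
    refine Summable.congr (f := fun n : ℕ =>
      Real.exp (-lam' * τ) * ((lam' * τ) ^ n / (n.factorial : ℝ)))
      ((Real.summable_pow_div_factorial (lam' * τ)).mul_left _) (fun n => by rw [hw]; ring)
  have htsumw : (∑' n, w n) = 1 := by
    calc (∑' n, w n)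
        = ∑' n : ℕ, Real.exp (-lam' * τ) * ((lam' * τ) ^ n / (n.factorial : ℝ)) :=
          tsum_congr (fun n => by rw [hw]; ring)
      _ = Real.exp (-lam' * τ) * ∑' n : ℕ, (lam' * τ) ^ n / (n.factorial : ℝ) := tsum_mul_left
      _ = Real.exp (-lam' * τ) * Real.exp (lam' * τ) := by
          rw [Real.exp_eq_exp_ℝ, NormedSpace.exp_eq_tsum_div]
      _ = 1 := by rw [← Real.exp_add]; simp
  have hsumwE : Summable (fun n => w n * E n) := by
    refine Summable.congr (f := fun n : ℕ =>
      (Real.exp (-lam' * τ) * Real.exp (-((r - lam * (Real.exp mJ - 1)) * τ)))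
        * ((lam' * τ * Real.exp (-mJ)) ^ n / (n.factorial : ℝ)))
      ((Real.summable_pow_div_factorial _).mul_left _) (fun n => by
        show _ * ((lam' * τ * Real.exp (-mJ)) ^ n / (n.factorial : ℝ)) = _
        rw [hw, hE n, mul_pow (lam' * τ) (Real.exp (-mJ)) n]; ring)
  set bound := fun n : ℕ => w n * (A + K * E n) with hbdef
  have hsumbound : Summable bound := by
    have h1 : Summable (fun n => w n * A) := hsumw.mul_right A
    have h2 : Summable (fun n => w n * (K * E n)) :=
      Summable.congr (f := fun n => K * (w n * E n)) (hsumwE.mul_left K) (fun n => by ring)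
    exact Summable.congr (f := fun n => w n * A + w n * (K * E n)) (h1.add h2)
      (fun n => by rw [hbdef]; ring)
  -- the summand
  set F := fun (S : ℝ) (n : ℕ) =>
    w n * (A * stdNormalCDF (-(d2 n S)) - S * stdNormalCDF (-(d1 n S))) with hFdef
  have hFbound : ∀ S : ℝ, 0 < S → ∀ n, ‖F S n‖ ≤ bound n := by
    intro S hS n
    have h1 : 0 ≤ stdNormalCDF (-(d2 n S)) := stdNormalCDF_nonneg _
    have h2 : stdNormalCDF (-(d2 n S)) ≤ 1 := stdNormalCDF_le_one _
    have h3 : 0 ≤ S * stdNormalCDF (-(d1 n S)) :=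
      mul_nonneg hS.le (stdNormalCDF_nonneg _)
    have h4 := hbd1 n S hS
    have h5 : 0 < K * E n := mul_pos hK (hEpos n)
    rw [hFdef, hbdef]
    simp only []
    rw [Real.norm_eq_abs, abs_mul, abs_of_nonneg (hw0 n)]
    apply mul_le_mul_of_nonneg_left _ (hw0 n)
    rw [abs_le]
    constructor
    · nlinarith
    · nlinarith
  have hPF0 : ∀ᶠ S in nhdsWithin (0:ℝ) (Set.Ioi 0), P S = ∑' n, F S n := by
    filter_upwards [self_mem_nhdsWithin] with S hS
    exact hP S hS
  have hPFtop : ∀ᶠ S in atTop, P S = ∑' n, F S n := by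
    filter_upwards [eventually_gt_atTop (0:ℝ)] with S hS
    exact hP S hS
  -- limits of d1 and d2
  have hd1form : ∀ n S, 0 < S → d1 n S
      = (Real.log S + (-Real.log K + rn n * τ + (σn n) ^ 2 * τ / 2)) * (σn n * Real.sqrt τ)⁻¹ := by
    intro n S hS
    rw [hd1 n S hS, Real.log_div hS.ne' hK.ne']
    ring
  have hd1bot : ∀ n, Tendsto (fun S => d1 n S) (nhdsWithin (0:ℝ) (Set.Ioi 0)) atBot := by
    intro n
    apply Tendsto.congr' (f₁ := fun S =>
      (Real.log S + (-Real.log K + rn n * τ + (σn n) ^ 2 * τ / 2)) * (σn n * Real.sqrt τ)⁻¹)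
    · filter_upwards [self_mem_nhdsWithin] with S hS
      exact (hd1form n S hS).symm
    · exact Tendsto.atBot_mul_const (inv_pos.2 (hapos n))
        (tendsto_atBot_add_const_right _ _ Real.tendsto_log_nhdsGT_zero)
  have hd1top : ∀ n, Tendsto (fun S => d1 n S) atTop atTop := by
    intro n
    apply Tendsto.congr' (f₁ := fun S =>
      (Real.log S + (-Real.log K + rn n * τ + (σn n) ^ 2 * τ / 2)) * (σn n * Real.sqrt τ)⁻¹)
    · filter_upwards [eventually_gt_atTop (0:ℝ)] with S hS
      exact (hd1form n S hS).symm
    · exact Tendsto.atTop_mul_const (inv_pos.2 (hapos n))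
        (tendsto_atTop_add_const_right _ _ Real.tendsto_log_atTop)
  have hd2bot : ∀ n, Tendsto (fun S => d2 n S) (nhdsWithin (0:ℝ) (Set.Ioi 0)) atBot := by
    intro n
    apply Tendsto.congr' (f₁ := fun S => d1 n S - σn n * Real.sqrt τ)
    · filter_upwards [self_mem_nhdsWithin] with S hS
      exact (hd2 n S hS).symm
    · exact tendsto_atBot_add_const_right _ _ (hd1bot n)
  have hd2top : ∀ n, Tendsto (fun S => d2 n S) atTop atTop := by
    intro n
    apply Tendsto.congr' (f₁ := fun S => d1 n S - σn n * Real.sqrt τ)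
    · filter_upwards [eventually_gt_atTop (0:ℝ)] with S hS
      exact (hd2 n S hS).symm
    · exact tendsto_atTop_add_const_right _ _ (hd1top n)
  -- limits of the summand at 0⁺
  have hΦ2lim0 : ∀ n, Tendsto (fun S => stdNormalCDF (-(d2 n S)))
      (nhdsWithin (0:ℝ) (Set.Ioi 0)) (nhds 1) := fun n =>
    tendsto_stdNormalCDF_atTop.comp (tendsto_neg_atBot_atTop.comp (hd2bot n))
  have hSΦ1lim0 : ∀ n, Tendsto (fun S => S * stdNormalCDF (-(d1 n S)))
      (nhdsWithin (0:ℝ) (Set.Ioi 0)) (nhds 0) := by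
    intro n
    apply squeeze_zero' (g := fun S => S)
    · filter_upwards [self_mem_nhdsWithin] with S hS
      exact mul_nonneg (le_of_lt hS) (stdNormalCDF_nonneg _)
    · filter_upwards [self_mem_nhdsWithin] with S hS
      calc S * stdNormalCDF (-(d1 n S)) ≤ S * 1 :=
            mul_le_mul_of_nonneg_left (stdNormalCDF_le_one _) (le_of_lt hS)
        _ = S := mul_one S
    · exact tendsto_id.mono_left nhdsWithin_le_nhds
  have hFlim0 : ∀ n, Tendsto (fun S => F S n)
      (nhdsWithin (0:ℝ) (Set.Ioi 0)) (nhds (w n * A)) := by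
    intro n
    have h := (((hΦ2lim0 n).const_mul A).sub (hSΦ1lim0 n)).const_mul (w n)
    simpa using h
  have hDC0 : Tendsto (fun S => ∑' n, F S n) (nhdsWithin (0:ℝ) (Set.Ioi 0))
      (nhds (∑' n, w n * A)) := by
    apply tendsto_tsum_of_dominated_convergence hsumbound hFlim0
    filter_upwards [self_mem_nhdsWithin] with S hS
    exact hFbound S hS
  have htsum0 : (∑' n, w n * A) = A := by rw [tsum_mul_right, htsumw, one_mul]
  rw [htsum0] at hDC0
  -- limits of the summand at ∞
  have hΦ2limtop : ∀ n, Tendsto (fun S => stdNormalCDF (-(d2 n S))) atTop (nhds 0) := fun n =>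
    tendsto_stdNormalCDF_atBot.comp (tendsto_neg_atTop_atBot.comp (hd2top n))
  have hSΦ1limtop : ∀ n, Tendsto (fun S => S * stdNormalCDF (-(d1 n S))) atTop (nhds 0) := by
    intro n
    apply squeeze_zero' (g := fun S =>
      K ^ 2 * Real.exp ((σn n) ^ 2 * τ - 2 * (rn n * τ)) / S)
    · filter_upwards [eventually_gt_atTop (0:ℝ)] with S hS
      exact mul_nonneg (le_of_lt hS) (stdNormalCDF_nonneg _)
    · filter_upwards [eventually_gt_atTop (0:ℝ)] with S hS
      exact hbd2 n S hS
    · exact Tendsto.div_atTop tendsto_const_nhds tendsto_id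
  have hFlimtop : ∀ n, Tendsto (fun S => F S n) atTop (nhds 0) := by
    intro n
    have h := (((hΦ2limtop n).const_mul A).sub (hSΦ1limtop n)).const_mul (w n)
    simpa using h
  have hDCtop : Tendsto (fun S => ∑' n, F S n) atTop (nhds 0) := by
    have h := tendsto_tsum_of_dominated_convergence (g := fun _ : ℕ => (0:ℝ)) hsumbound hFlimtop
      (by filter_upwards [eventually_gt_atTop (0:ℝ)] with S hS; exact hFbound S hS)
    rw [tsum_zero] at h
    exact h
  exact ⟨hDC0.congr' (hPF0.mono fun S h => h.symm),
    hDCtop.congr' (hPFtop.mono fun S h => h.symm)⟩
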